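/- For every matrix U in the set 𝒰ₙ of upper triangular n×n complex matrices with 1's on the diagonal and every i with 1 ≤ i ≤ n−1, the matrix A^{βᵢ}(U) is invertible (its determinant equals −1 up to sign, coming from the 2×2 block with zero (i,i)-entry), and the matrix A^{βᵢ}(U)·U·A^{βᵢ}(U) again belongs to 𝒰ₙ. Consequently the map Tᵢ(U,C) := (A^{βᵢ}(U)·U·A^{βᵢ}(U), C·A^{βᵢ}(U)^{−1}) sends 𝒰ₙ × GL(n,ℂ) to itself. -/

import Mathlib

open Matrix

/-- The set `𝒰ₙ` of upper triangular `n × n` complex matrices with `1`'s on the diagonal. -/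
def upperUnitriangular (n : ℕ) : Set (Matrix (Fin n) (Fin n) ℂ) :=
  {U | (∀ a b : Fin n, b < a → U a b = 0) ∧ ∀ a : Fin n, U a a = 1}

/-- The matrix `A^{βᵢ}(U)`: identity outside rows/columns `i, i'` (where `i' = i+1`),
with `(i,i)`-entry `0`, `(i,i')`- and `(i',i)`-entries `1`, and `(i',i')`-entry `-U i i'`. -/
def braidMat {n : ℕ} (U : Matrix (Fin n) (Fin n) ℂ) (i i' : Fin n) :
    Matrix (Fin n) (Fin n) ℂ := fun a b =>
  if a = i ∧ b = i' then 1
  else if a = i' ∧ b = i then 1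
  else if a = i' ∧ b = i' then -U i i'
  else if a = b ∧ a ≠ i ∧ a ≠ i' then 1
  else 0

theorem stmt0 (n : ℕ) (i : Fin n) (h : (i : ℕ) + 1 < n)
    (U : Matrix (Fin n) (Fin n) ℂ) (hU : U ∈ upperUnitriangular n)
    (C : Matrix (Fin n) (Fin n) ℂ) (hC : IsUnit C) :
    (braidMat U i ⟨(i : ℕ) + 1, h⟩).det = -1 ∧
    IsUnit (braidMat U i ⟨(i : ℕ) + 1, h⟩) ∧
    braidMat U i ⟨(i : ℕ) + 1, h⟩ * U * braidMat U i ⟨(i : ℕ) + 1, h⟩ ∈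
      upperUnitriangular n ∧
    IsUnit (C * (braidMat U i ⟨(i : ℕ) + 1, h⟩)⁻¹) := by
  obtain ⟨hU0, hU1⟩ := hU
  set i' : Fin n := ⟨(i : ℕ) + 1, h⟩ with hi'
  have hvi' : (i' : ℕ) = (i : ℕ) + 1 := rfl
  have hlt : i < i' := by rw [Fin.lt_def]; omega
  have hne : i ≠ i' := Fin.ne_of_lt hlt
  set B := braidMat U i i' with hBdef
  -- row entries of B
  have hBrow1 : ∀ k, B i k = if k = i' then 1 else 0 := by
    intro k
    by_cases hk : k = i' <;> simp [hBdef, braidMat, hk, hne]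
  have hBrow2 : ∀ k, B i' k = (if k = i then 1 else 0) + (if k = i' then -U i i' else 0) := by
    intro k
    by_cases hk : k = i
    · simp [hBdef, braidMat, hk, hne, hne.symm]
    · by_cases hk' : k = i' <;> simp [hBdef, braidMat, hk, hk', hne, hne.symm]
  have hBrow3 : ∀ a, a ≠ i → a ≠ i' → ∀ k, B a k = if k = a then 1 else 0 := by
    intro a hai hai' k
    by_cases hk : k = a
    · simp [hBdef, braidMat, hk, hai, hai']
    · simp [hBdef, braidMat, hk, hai, hai', Ne.symm hk]
  -- column entries of B
  have hBcol1 : ∀ k, B k i = if k = i' then 1 else 0 := by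
    intro k
    by_cases hk : k = i' <;> simp [hBdef, braidMat, hk, hne, hne.symm]
  have hBcol2 : ∀ k, B k i' = (if k = i then 1 else 0) + (if k = i' then -U i i' else 0) := by
    intro k
    by_cases hk : k = i
    · simp [hBdef, braidMat, hk, hne, hne.symm]
    · by_cases hk' : k = i' <;> simp [hBdef, braidMat, hk, hk', hne, hne.symm]
  have hBcol3 : ∀ b, b ≠ i → b ≠ i' → ∀ k, B k b = if k = b then 1 else 0 := by
    intro b hbi hbi' k
    by_cases hk : k = b
    · simp [hBdef, braidMat, hk, hbi, hbi']
    · simp [hBdef, braidMat, hk, hbi, hbi', Ne.symm hbi]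
  -- multiplication formulas
  have hrow : ∀ (M : Matrix (Fin n) (Fin n) ℂ) a b,
      (B * M) a b = if a = i then M i' b
        else if a = i' then M i b - U i i' * M i' b else M a b := by
    intro M a b
    by_cases ha : a = i
    · rw [ha, if_pos rfl, mul_apply]
      simp [hBrow1, ite_mul]
    · by_cases ha' : a = i'
      · rw [ha', if_neg (by rw [← ha']; exact fun hh => ha hh), if_pos rfl, mul_apply]
        simp [hBrow2, add_mul, ite_mul, Finset.sum_add_distrib, sub_eq_add_neg]
      · rw [if_neg ha, if_neg ha', mul_apply]
        simp [hBrow3 a ha ha', ite_mul]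
  have hcol : ∀ (M : Matrix (Fin n) (Fin n) ℂ) a b,
      (M * B) a b = if b = i then M a i'
        else if b = i' then M a i - U i i' * M a i' else M a b := by
    intro M a b
    by_cases hb : b = i
    · rw [hb, if_pos rfl, mul_apply]
      simp [hBcol1, mul_ite]
    · by_cases hb' : b = i'
      · rw [hb', if_neg (by rw [← hb']; exact fun hh => hb hh), if_pos rfl, mul_apply]
        simp [hBcol2, mul_add, mul_ite, Finset.sum_add_distrib, sub_eq_add_neg, mul_comm]
      · rw [if_neg hb, if_neg hb', mul_apply]
        simp [hBcol3 b hb hb', mul_ite]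
  -- factorization as permutation * transvection
  have hfact : B = (Equiv.swap i i').toPEquiv.toMatrix * Matrix.transvection i i' (-U i i') := by
    ext a b
    rw [PEquiv.toMatrix_toPEquiv_mul, submatrix_apply, id_eq]
    by_cases ha : a = i
    · rw [ha, Equiv.swap_apply_left, hBrow1]
      by_cases hb : b = i' <;>
        simp [transvection, Matrix.single, one_apply, hb, hne, hne.symm, eq_comm]
    · by_cases ha' : a = i'
      · rw [ha', Equiv.swap_apply_right, hBrow2]
        by_cases hb : b = i
        · simp [transvection, Matrix.single, one_apply, hb, hne, hne.symm, eq_comm]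
        · by_cases hb' : b = i'
          · simp [transvection, Matrix.single, one_apply, hb, hb', hne, hne.symm, eq_comm]
          · simp [transvection, Matrix.single, one_apply, hb, hb', hne, hne.symm,
              Ne.symm hb, Ne.symm hb']
      · rw [Equiv.swap_apply_of_ne_of_ne ha ha', hBrow3 a ha ha']
        by_cases hb : b = a
        · simp [transvection, Matrix.single, one_apply, hb, ha, ha', eq_comm]
        · simp [transvection, Matrix.single, one_apply, hb, ha, ha',
            Ne.symm hb, Ne.symm ha]
  have hdet : B.det = -1 := by
    rw [hfact, det_mul, Matrix.det_transvection_of_ne _ _ hne, mul_one]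
    have hperm : ((Equiv.swap i i').permMatrix ℂ).det =
        (Equiv.Perm.sign (Equiv.swap i i') : ℂ) := Matrix.det_permutation _
    rw [Equiv.Perm.permMatrix] at hperm
    rw [hperm, Equiv.Perm.sign_swap hne]
    simp
  have hBunit : IsUnit B := by
    rw [Matrix.isUnit_iff_isUnit_det, hdet]
    exact isUnit_one.neg
  refine ⟨hdet, hBunit, ?_, hC.mul (Matrix.isUnit_nonsing_inv_iff.2 hBunit)⟩
  -- membership of B * U * B in 𝒰ₙ
  set W := U * B with hWdef
  have hW : ∀ a b, W a b = if b = i then U a i'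
      else if b = i' then U a i - U i i' * U a i' else U a b := hcol U
  have hBW : ∀ a b, (B * U * B) a b = if a = i then W i' b
      else if a = i' then W i b - U i i' * W i' b else W a b := by
    intro a b
    rw [mul_assoc, ← hWdef]
    exact hrow W a b
  have hUii : U i i = 1 := hU1 i
  have hUi'i' : U i' i' = 1 := hU1 i'
  have hUi'i : U i' i = 0 := hU0 i' i hlt
  constructor
  · intro a b hab
    have hba : (b : ℕ) < (a : ℕ) := hab
    rw [hBW]
    by_cases ha : a = i
    · have hbvi : (b : ℕ) < (i : ℕ) := by rw [← ha]; exact hba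
      have hb1 : b ≠ i := fun hh => by simp [hh] at hbvi
      have hb2 : b ≠ i' := fun hh => by rw [hh] at hbvi; omega
      rw [if_pos ha, hW, if_neg hb1, if_neg hb2]
      exact hU0 i' b (by rw [Fin.lt_def]; omega)
    · by_cases ha' : a = i'
      · rw [if_neg ha, if_pos ha', hW, hW]
        by_cases hb : b = i
        · rw [if_pos hb, if_pos hb, hUi'i']
          ring
        · have hbvi : (b : ℕ) < (i : ℕ) := by
            have h1 : (b : ℕ) < (i' : ℕ) := by rw [← ha']; exact hba
            have h2 : (b : ℕ) ≠ (i : ℕ) := fun hh => hb (Fin.ext hh)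
            omega
          have hb2 : b ≠ i' := fun hh => by rw [hh] at hbvi; omega
          rw [if_neg hb, if_neg hb2, if_neg hb, if_neg hb2,
            hU0 i b (by rw [Fin.lt_def]; omega), hU0 i' b (by rw [Fin.lt_def]; omega)]
          ring
      · rw [if_neg ha, if_neg ha', hW]
        by_cases hb : b = i
        · have hva : (i' : ℕ) < (a : ℕ) := by
            have h1 : (i : ℕ) < (a : ℕ) := by rw [← hb]; exact hba
            have h2 : (a : ℕ) ≠ (i' : ℕ) := fun hh => ha' (Fin.ext hh)
            omega
          rw [if_pos hb]
          exact hU0 a i' (by rw [Fin.lt_def]; omega)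
        · by_cases hb' : b = i'
          · have hva : (i' : ℕ) < (a : ℕ) := by rw [← hb']; exact hba
            rw [if_neg hb, if_pos hb',
              hU0 a i (by rw [Fin.lt_def]; omega), hU0 a i' (by rw [Fin.lt_def]; omega)]
            ring
          · rw [if_neg hb, if_neg hb']
            exact hU0 a b hab
  · intro a
    rw [hBW]
    by_cases ha : a = i
    · rw [if_pos ha, hW, ha, if_pos rfl]
      exact hUi'i'
    · by_cases ha' : a = i'
      · rw [if_neg ha, if_pos ha', hW, hW, ha',
          if_neg (Ne.symm hne), if_pos rfl, if_neg (Ne.symm hne), if_pos rfl,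
          hUii, hUi'i, hUi'i']
        ring
      · rw [if_neg ha, if_neg ha', hW, if_neg ha, if_neg ha']
        exact hU1 a
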